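/- arXiv:1312.1731 — 2 statements merged into one kernel-verified Lean document; each statement's English description precedes it below -/
import Mathlib

section
/- Let $(\Gamma, \mathcal{G}, \pi)$ be a standard Borel probability space, $m, n$ positive integers, $\kappa_1, \kappa_2 : \Gamma \to \mathbb{R}^{m \times n}$ square-integrable, and $c : \Gamma \to \mathbb{R}^{m}$ integrable. For $v \in \mathbb{R}^{m}$ define the relaxed value $L^{r}(v) = \inf \tfrac12 \int(\|z_1\|^2+\|z_2\|^2)\,dP$ over all probability measures $P$ on $\mathbb{R}^{n}\times\mathbb{R}^{n}\times\Gamma$ with $\Gamma$-marginal $\pi$, finite second moments in $(z_1,z_2)$, and $\int (c(\gamma)+\kappa_1(\gamma)z_1+\kappa_2(\gamma)z_2)\,dP = v$; and the ordinary value $L^{o}(v) = \inf \tfrac12 \mathrm{E}^{\pi}[\|u_1\|^2+\|u_2\|^2]$ over all $u_1,u_2 \in L^2(\pi;\mathbb{R}^{n})$ with $\mathrm{E}^{\pi}[c + \kappa_1 u_1 + \kappa_2 u_2] = v$. Then $L^{r}(v) = L^{o}(v)$. -/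
open MeasureTheory Matrix

private lemma l2_mul_integrable {α : Type*} [MeasurableSpace α] {μ : Measure α} {f g : α → ℝ}
    (hf : MemLp f 2 μ) (hg : MemLp g 2 μ) : Integrable (fun x => f x * g x) μ := by
  have h1 := (hf.add hg).integrable_sq
  have h2 := hf.integrable_sq
  have h3 := hg.integrable_sq
  have h4 := (((h1.sub h2).sub h3).const_mul (1 / 2 : ℝ))
  refine h4.congr (Filter.Eventually.of_forall fun x => ?_)
  simp only [Pi.sub_apply, Pi.add_apply]
  ring

private lemma exists_mulVec_eq {m : ℕ} (M : Matrix (Fin m) (Fin m) ℝ) (hM : Mᵀ = M)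
    (d : Fin m → ℝ) (hd : ∀ w : Fin m → ℝ, M *ᵥ w = 0 → d ⬝ᵥ w = 0) :
    ∃ lam : Fin m → ℝ, M *ᵥ lam = d := by
  classical
  set T : EuclideanSpace ℝ (Fin m) →ₗ[ℝ] EuclideanSpace ℝ (Fin m) := Matrix.toEuclideanLin M
  have hT : ∀ x : EuclideanSpace ℝ (Fin m), T x = M *ᵥ x := fun x => rfl
  have hsymm : ∀ x y : EuclideanSpace ℝ (Fin m), inner ℝ (T x) y = (inner ℝ x (T y) : ℝ) := by
    intro x y
    simp only [PiLp.inner_apply, RCLike.inner_apply', conj_trivial, hT]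
    calc ∑ i, (M *ᵥ x) i * y i = ∑ i, ∑ j, M i j * x j * y i := by
          simp [Matrix.mulVec, dotProduct, Finset.sum_mul]
      _ = ∑ j, x j * (M *ᵥ y) j := by
          rw [Finset.sum_comm]
          refine Finset.sum_congr rfl fun j _ => ?_
          simp only [Matrix.mulVec, dotProduct, Finset.mul_sum]
          refine Finset.sum_congr rfl fun i _ => ?_
          have h2 : M j i = M i j := by conv_lhs => rw [← hM, Matrix.transpose_apply]
          rw [h2]; ring
  have hker : (LinearMap.range T)ᗮ = LinearMap.ker T := by
    ext w
    constructor
    · intro hw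
      have h1 : inner ℝ (T w) (T w) = (0 : ℝ) := by
        have h2 := hw (T (T w)) ⟨T w, rfl⟩
        rwa [hsymm (T w) w, real_inner_comm] at h2
      exact LinearMap.mem_ker.mpr (inner_self_eq_zero.mp h1)
    · intro hw u hu
      obtain ⟨x, rfl⟩ := hu
      rw [hsymm x w, LinearMap.mem_ker.mp hw, inner_zero_right]
  have hrange : LinearMap.range T = (LinearMap.ker T)ᗮ := by
    rw [← hker, Submodule.orthogonal_orthogonal]
  have hdmem : (WithLp.toLp 2 d : EuclideanSpace ℝ (Fin m)) ∈ (LinearMap.ker T)ᗮ := by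
    intro w hw
    have hw0 : M *ᵥ w = 0 := by rw [← hT w, LinearMap.mem_ker.mp hw, WithLp.ofLp_zero]
    have h3 := hd w hw0
    simp only [PiLp.inner_apply, RCLike.inner_apply, conj_trivial]
    simpa [dotProduct, mul_comm] using h3
  rw [← hrange] at hdmem
  obtain ⟨lam, hlam⟩ := hdmem
  exact ⟨lam, by rw [← hT lam, hlam]⟩

/-- Equality of the relaxed and ordinary formulations of the local rate
function: the infimum of `½∫(‖z₁‖²+‖z₂‖²)dP` over relaxed controls (probability
measures on `ℝⁿ × ℝⁿ × Γ` with `Γ`-marginal `π`, finite second moments and mean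
drift `v`) equals the infimum of `½E^π[‖u₁‖²+‖u₂‖²]` over ordinary
square-integrable controls with mean drift `v`. -/
theorem relaxed_eq_ordinary_local_rate
    {Γ : Type*} [MeasurableSpace Γ] [StandardBorelSpace Γ]
    (π : Measure Γ) [IsProbabilityMeasure π]
    (m n : ℕ) (hm : 0 < m) (hn : 0 < n)
    (κ1 κ2 : Γ → Matrix (Fin m) (Fin n) ℝ)
    (hκ1meas : ∀ i j, Measurable fun γ => κ1 γ i j)
    (hκ2meas : ∀ i j, Measurable fun γ => κ2 γ i j)
    (hκ1 : ∀ i j, MemLp (fun γ => κ1 γ i j) 2 π)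
    (hκ2 : ∀ i j, MemLp (fun γ => κ2 γ i j) 2 π)
    (c : Γ → Fin m → ℝ)
    (hcmeas : ∀ i, Measurable fun γ => c γ i)
    (hcint : ∀ i, Integrable (fun γ => c γ i) π)
    (v : Fin m → ℝ) :
    sInf { a : ℝ | ∃ P : Measure ((Fin n → ℝ) × (Fin n → ℝ) × Γ),
        IsProbabilityMeasure P ∧
        P.map (fun p => p.2.2) = π ∧
        Integrable (fun p : (Fin n → ℝ) × (Fin n → ℝ) × Γ =>
          (∑ i, (p.1 i) ^ 2) + ∑ i, (p.2.1 i) ^ 2) P ∧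
        (∀ i, (∫ p : (Fin n → ℝ) × (Fin n → ℝ) × Γ,
            (c p.2.2 + κ1 p.2.2 *ᵥ p.1 + κ2 p.2.2 *ᵥ p.2.1) i ∂P) = v i) ∧
        a = (1 / 2) * ∫ p : (Fin n → ℝ) × (Fin n → ℝ) × Γ,
          ((∑ i, (p.1 i) ^ 2) + ∑ i, (p.2.1 i) ^ 2) ∂P }
    = sInf { a : ℝ | ∃ u1 u2 : Γ → Fin n → ℝ,
        (∀ i, Measurable fun γ => u1 γ i) ∧
        (∀ i, Measurable fun γ => u2 γ i) ∧
        (∀ i, MemLp (fun γ => u1 γ i) 2 π) ∧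
        (∀ i, MemLp (fun γ => u2 γ i) 2 π) ∧
        (∀ i, (∫ γ, (c γ + κ1 γ *ᵥ u1 γ + κ2 γ *ᵥ u2 γ) i ∂π) = v i) ∧
        a = (1 / 2) * ∫ γ, ((∑ i, (u1 γ i) ^ 2) + ∑ i, (u2 γ i) ^ 2) ∂π } := by
  classical
  set Sr : Set ℝ := { a : ℝ | ∃ P : Measure ((Fin n → ℝ) × (Fin n → ℝ) × Γ),
        IsProbabilityMeasure P ∧
        P.map (fun p => p.2.2) = π ∧
        Integrable (fun p : (Fin n → ℝ) × (Fin n → ℝ) × Γ =>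
          (∑ i, (p.1 i) ^ 2) + ∑ i, (p.2.1 i) ^ 2) P ∧
        (∀ i, (∫ p : (Fin n → ℝ) × (Fin n → ℝ) × Γ,
            (c p.2.2 + κ1 p.2.2 *ᵥ p.1 + κ2 p.2.2 *ᵥ p.2.1) i ∂P) = v i) ∧
        a = (1 / 2) * ∫ p : (Fin n → ℝ) × (Fin n → ℝ) × Γ,
          ((∑ i, (p.1 i) ^ 2) + ∑ i, (p.2.1 i) ^ 2) ∂P } with hSrdef
  set So : Set ℝ := { a : ℝ | ∃ u1 u2 : Γ → Fin n → ℝ,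
        (∀ i, Measurable fun γ => u1 γ i) ∧
        (∀ i, Measurable fun γ => u2 γ i) ∧
        (∀ i, MemLp (fun γ => u1 γ i) 2 π) ∧
        (∀ i, MemLp (fun γ => u2 γ i) 2 π) ∧
        (∀ i, (∫ γ, (c γ + κ1 γ *ᵥ u1 γ + κ2 γ *ᵥ u2 γ) i ∂π) = v i) ∧
        a = (1 / 2) * ∫ γ, ((∑ i, (u1 γ i) ^ 2) + ∑ i, (u2 γ i) ^ 2) ∂π } with hSodef
  -- basic measurability
  have hprojm : Measurable (fun p : (Fin n → ℝ) × (Fin n → ℝ) × Γ => p.2.2) :=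
    measurable_snd.comp measurable_snd
  have hz1m : ∀ j, Measurable (fun p : (Fin n → ℝ) × (Fin n → ℝ) × Γ => p.1 j) :=
    fun j => (measurable_pi_apply j).comp measurable_fst
  have hz2m : ∀ j, Measurable (fun p : (Fin n → ℝ) × (Fin n → ℝ) × Γ => p.2.1 j) :=
    fun j => (measurable_pi_apply j).comp (measurable_fst.comp measurable_snd)
  have hQm : Measurable (fun p : (Fin n → ℝ) × (Fin n → ℝ) × Γ =>
      (∑ i, (p.1 i) ^ 2) + ∑ i, (p.2.1 i) ^ 2) := by
    refine Measurable.add ?_ ?_ <;>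
      exact Finset.measurable_sum _ (fun i _ => by
        first
        | exact (hz1m i).pow_const 2
        | exact (hz2m i).pow_const 2)
  -- mean of c
  set cb : Fin m → ℝ := fun i => ∫ γ, c γ i ∂π with hcbdef
  -- the Gram matrix
  have hm1int : ∀ i k j, Integrable (fun γ => κ1 γ i j * κ1 γ k j) π :=
    fun i k j => l2_mul_integrable (hκ1 i j) (hκ1 k j)
  have hm2int : ∀ i k j, Integrable (fun γ => κ2 γ i j * κ2 γ k j) π :=
    fun i k j => l2_mul_integrable (hκ2 i j) (hκ2 k j)
  set M : Matrix (Fin m) (Fin m) ℝ := Matrix.of (fun i k =>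
    ∫ γ, ((∑ j, κ1 γ i j * κ1 γ k j) + ∑ j, κ2 γ i j * κ2 γ k j) ∂π) with hMdef
  have hMsymm : Mᵀ = M := by
    ext i k
    simp only [hMdef, Matrix.transpose_apply, Matrix.of_apply]
    congr 1
    funext γ
    congr 1 <;> exact Finset.sum_congr rfl fun j _ => mul_comm _ _
  -- g functions L2 under π
  have hg1m : ∀ (w : Fin m → ℝ) (j), Measurable (fun γ => ∑ i, w i * κ1 γ i j) :=
    fun w j => Finset.measurable_sum _ (fun i _ => (hκ1meas i j).const_mul (w i))
  have hg2m : ∀ (w : Fin m → ℝ) (j), Measurable (fun γ => ∑ i, w i * κ2 γ i j) :=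
    fun w j => Finset.measurable_sum _ (fun i _ => (hκ2meas i j).const_mul (w i))
  have hg1L2 : ∀ (w : Fin m → ℝ) (j), MemLp (fun γ => ∑ i, w i * κ1 γ i j) 2 π :=
    fun w j => memLp_finset_sum _ (fun i _ => (hκ1 i j).const_mul (w i))
  have hg2L2 : ∀ (w : Fin m → ℝ) (j), MemLp (fun γ => ∑ i, w i * κ2 γ i j) 2 π :=
    fun w j => memLp_finset_sum _ (fun i _ => (hκ2 i j).const_mul (w i))
  have hGint : ∀ w : Fin m → ℝ, Integrable (fun γ =>
      (∑ j, (∑ i, w i * κ1 γ i j) ^ 2) + ∑ j, (∑ i, w i * κ2 γ i j) ^ 2) π :=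
    fun w => (integrable_finset_sum _ fun j _ => (hg1L2 w j).integrable_sq).add
      (integrable_finset_sum _ fun j _ => (hg2L2 w j).integrable_sq)
  -- B1 : mulVec by M as integrals
  have hB1 : ∀ (w : Fin m → ℝ) (i), (M *ᵥ w) i =
      (∑ j, ∫ γ, κ1 γ i j * (∑ k, w k * κ1 γ k j) ∂π)
      + ∑ j, ∫ γ, κ2 γ i j * (∑ k, w k * κ2 γ k j) ∂π := by
    intro w i
    have e1 : ∀ j, ∫ γ, κ1 γ i j * (∑ k, w k * κ1 γ k j) ∂π
        = ∑ k, w k * ∫ γ, κ1 γ i j * κ1 γ k j ∂π := by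
      intro j
      rw [show (fun γ => κ1 γ i j * (∑ k, w k * κ1 γ k j))
          = fun γ => ∑ k, w k * (κ1 γ i j * κ1 γ k j) from funext fun γ => by
        rw [Finset.mul_sum]; exact Finset.sum_congr rfl fun k _ => by ring]
      rw [integral_finset_sum _ (fun k _ => (hm1int i k j).const_mul (w k))]
      exact Finset.sum_congr rfl fun k _ => integral_const_mul _ _
    have e2 : ∀ j, ∫ γ, κ2 γ i j * (∑ k, w k * κ2 γ k j) ∂π
        = ∑ k, w k * ∫ γ, κ2 γ i j * κ2 γ k j ∂π := by
      intro j
      rw [show (fun γ => κ2 γ i j * (∑ k, w k * κ2 γ k j))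
          = fun γ => ∑ k, w k * (κ2 γ i j * κ2 γ k j) from funext fun γ => by
        rw [Finset.mul_sum]; exact Finset.sum_congr rfl fun k _ => by ring]
      rw [integral_finset_sum _ (fun k _ => (hm2int i k j).const_mul (w k))]
      exact Finset.sum_congr rfl fun k _ => integral_const_mul _ _
    simp only [e1, e2]
    have lhs : (M *ᵥ w) i = ∑ k, ((∑ j, ∫ γ, κ1 γ i j * κ1 γ k j ∂π)
        + ∑ j, ∫ γ, κ2 γ i j * κ2 γ k j ∂π) * w k := by
      simp only [Matrix.mulVec, dotProduct, hMdef, Matrix.of_apply]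
      refine Finset.sum_congr rfl fun k _ => ?_
      rw [integral_add (integrable_finset_sum _ fun j _ => hm1int i k j)
        (integrable_finset_sum _ fun j _ => hm2int i k j),
        integral_finset_sum _ (fun j _ => hm1int i k j),
        integral_finset_sum _ (fun j _ => hm2int i k j)]
    rw [lhs]
    rw [show (∑ k, ((∑ j, ∫ γ, κ1 γ i j * κ1 γ k j ∂π)
        + ∑ j, ∫ γ, κ2 γ i j * κ2 γ k j ∂π) * w k)
        = (∑ k, ∑ j, w k * ∫ γ, κ1 γ i j * κ1 γ k j ∂π)
          + ∑ k, ∑ j, w k * ∫ γ, κ2 γ i j * κ2 γ k j ∂π from by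
      rw [← Finset.sum_add_distrib]
      refine Finset.sum_congr rfl fun k _ => ?_
      rw [add_mul, Finset.sum_mul, Finset.sum_mul]
      congr 1 <;> exact Finset.sum_congr rfl fun j _ => by ring]
    rw [Finset.sum_comm, Finset.sum_comm (s := Finset.univ) (t := Finset.univ)
      (f := fun k j => w k * ∫ γ, κ2 γ i j * κ2 γ k j ∂π)]
  -- B2 : quadratic form
  have hB2 : ∀ w : Fin m → ℝ, ∫ γ, ((∑ j, (∑ i, w i * κ1 γ i j) ^ 2)
      + ∑ j, (∑ i, w i * κ2 γ i j) ^ 2) ∂π = ∑ i, w i * (M *ᵥ w) i := by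
    intro w
    -- RHS transformation using hB1
    have step1 : ∑ i, w i * (M *ᵥ w) i
        = (∑ j, ∑ i, ∫ γ, w i * (κ1 γ i j * (∑ k, w k * κ1 γ k j)) ∂π)
          + ∑ j, ∑ i, ∫ γ, w i * (κ2 γ i j * (∑ k, w k * κ2 γ k j)) ∂π := by
      calc ∑ i, w i * (M *ᵥ w) i
          = ∑ i, ((∑ j, ∫ γ, w i * (κ1 γ i j * (∑ k, w k * κ1 γ k j)) ∂π)
            + ∑ j, ∫ γ, w i * (κ2 γ i j * (∑ k, w k * κ2 γ k j)) ∂π) := by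
            refine Finset.sum_congr rfl fun i _ => ?_
            rw [hB1 w i, mul_add, Finset.mul_sum, Finset.mul_sum]
            congr 1 <;> exact Finset.sum_congr rfl fun j _ => (integral_const_mul _ _).symm
        _ = (∑ i, ∑ j, ∫ γ, w i * (κ1 γ i j * (∑ k, w k * κ1 γ k j)) ∂π)
            + ∑ i, ∑ j, ∫ γ, w i * (κ2 γ i j * (∑ k, w k * κ2 γ k j)) ∂π :=
            Finset.sum_add_distrib
        _ = _ := by rw [Finset.sum_comm (f := fun i j =>
              ∫ γ, w i * (κ1 γ i j * (∑ k, w k * κ1 γ k j)) ∂π),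
              Finset.sum_comm (f := fun i j =>
              ∫ γ, w i * (κ2 γ i j * (∑ k, w k * κ2 γ k j)) ∂π)]
    have step2 : ∀ j, ∑ i, ∫ γ, w i * (κ1 γ i j * (∑ k, w k * κ1 γ k j)) ∂π
        = ∫ γ, (∑ i, w i * κ1 γ i j) ^ 2 ∂π := by
      intro j
      rw [← integral_finset_sum _ (fun i _ =>
        (l2_mul_integrable (hκ1 i j) (hg1L2 w j)).const_mul (w i))]
      refine integral_congr_ae (Filter.Eventually.of_forall fun γ => ?_)
      show ∑ i, w i * (κ1 γ i j * (∑ k, w k * κ1 γ k j)) = (∑ i, w i * κ1 γ i j) ^ 2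
      rw [sq, Finset.sum_mul]
      exact Finset.sum_congr rfl fun i _ => by ring
    have step3 : ∀ j, ∑ i, ∫ γ, w i * (κ2 γ i j * (∑ k, w k * κ2 γ k j)) ∂π
        = ∫ γ, (∑ i, w i * κ2 γ i j) ^ 2 ∂π := by
      intro j
      rw [← integral_finset_sum _ (fun i _ =>
        (l2_mul_integrable (hκ2 i j) (hg2L2 w j)).const_mul (w i))]
      refine integral_congr_ae (Filter.Eventually.of_forall fun γ => ?_)
      show ∑ i, w i * (κ2 γ i j * (∑ k, w k * κ2 γ k j)) = (∑ i, w i * κ2 γ i j) ^ 2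
      rw [sq, Finset.sum_mul]
      exact Finset.sum_congr rfl fun i _ => by ring
    rw [step1]
    simp only [step2, step3]
    rw [← integral_finset_sum _ (fun j _ => (hg1L2 w j).integrable_sq),
      ← integral_finset_sum _ (fun j _ => (hg2L2 w j).integrable_sq),
      ← integral_add (integrable_finset_sum _ fun j _ => (hg1L2 w j).integrable_sq)
        (integrable_finset_sum _ fun j _ => (hg2L2 w j).integrable_sq)]
  -- block of facts for a feasible relaxed measure
  have hPblock : ∀ (P : Measure ((Fin n → ℝ) × (Fin n → ℝ) × Γ)),
      IsProbabilityMeasure P → P.map (fun p => p.2.2) = π →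
      Integrable (fun p : (Fin n → ℝ) × (Fin n → ℝ) × Γ =>
        (∑ i, (p.1 i) ^ 2) + ∑ i, (p.2.1 i) ^ 2) P →
      (∀ i, (∫ p : (Fin n → ℝ) × (Fin n → ℝ) × Γ,
          (c p.2.2 + κ1 p.2.2 *ᵥ p.1 + κ2 p.2.2 *ᵥ p.2.1) i ∂P) = v i) →
      ∀ w : Fin m → ℝ,
        Integrable (fun p : (Fin n → ℝ) × (Fin n → ℝ) × Γ =>
          (∑ j, (∑ i, w i * κ1 p.2.2 i j) * p.1 j)
          + ∑ j, (∑ i, w i * κ2 p.2.2 i j) * p.2.1 j) P ∧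
        (∑ i, w i * (v i - cb i)) = ∫ p : (Fin n → ℝ) × (Fin n → ℝ) × Γ,
          ((∑ j, (∑ i, w i * κ1 p.2.2 i j) * p.1 j)
          + ∑ j, (∑ i, w i * κ2 p.2.2 i j) * p.2.1 j) ∂P := by
    intro P hPprob hmarg hQint hdrift w
    haveI := hPprob
    have hz1sq : ∀ j, Integrable (fun p : (Fin n → ℝ) × (Fin n → ℝ) × Γ => (p.1 j) ^ 2) P := by
      intro j
      refine hQint.mono ((hz1m j).pow_const 2).aestronglyMeasurable
        (Filter.Eventually.of_forall fun p => ?_)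
      simp only [Real.norm_eq_abs]
      rw [abs_of_nonneg (sq_nonneg _), abs_of_nonneg (add_nonneg
        (Finset.sum_nonneg fun i _ => sq_nonneg _) (Finset.sum_nonneg fun i _ => sq_nonneg _))]
      calc (p.1 j) ^ 2 ≤ ∑ i, (p.1 i) ^ 2 :=
            Finset.single_le_sum (f := fun i => (p.1 i) ^ 2)
              (fun i _ => sq_nonneg _) (Finset.mem_univ j)
        _ ≤ _ := le_add_of_nonneg_right (Finset.sum_nonneg fun i _ => sq_nonneg _)
    have hz2sq : ∀ j, Integrable (fun p : (Fin n → ℝ) × (Fin n → ℝ) × Γ => (p.2.1 j) ^ 2) P := by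
      intro j
      refine hQint.mono ((hz2m j).pow_const 2).aestronglyMeasurable
        (Filter.Eventually.of_forall fun p => ?_)
      simp only [Real.norm_eq_abs]
      rw [abs_of_nonneg (sq_nonneg _), abs_of_nonneg (add_nonneg
        (Finset.sum_nonneg fun i _ => sq_nonneg _) (Finset.sum_nonneg fun i _ => sq_nonneg _))]
      calc (p.2.1 j) ^ 2 ≤ ∑ i, (p.2.1 i) ^ 2 :=
            Finset.single_le_sum (f := fun i => (p.2.1 i) ^ 2)
              (fun i _ => sq_nonneg _) (Finset.mem_univ j)
        _ ≤ _ := le_add_of_nonneg_left (Finset.sum_nonneg fun i _ => sq_nonneg _)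
    have hz1L2 : ∀ j, MemLp (fun p : (Fin n → ℝ) × (Fin n → ℝ) × Γ => p.1 j) 2 P :=
      fun j => (memLp_two_iff_integrable_sq (hz1m j).aestronglyMeasurable).mpr (hz1sq j)
    have hz2L2 : ∀ j, MemLp (fun p : (Fin n → ℝ) × (Fin n → ℝ) × Γ => p.2.1 j) 2 P :=
      fun j => (memLp_two_iff_integrable_sq (hz2m j).aestronglyMeasurable).mpr (hz2sq j)
    have hκ1P : ∀ i j, MemLp (fun p : (Fin n → ℝ) × (Fin n → ℝ) × Γ => κ1 p.2.2 i j) 2 P := by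
      intro i j
      have h := hκ1 i j
      rw [← hmarg] at h
      exact (memLp_map_measure_iff (hκ1meas i j).aestronglyMeasurable
        hprojm.aemeasurable).mp h
    have hκ2P : ∀ i j, MemLp (fun p : (Fin n → ℝ) × (Fin n → ℝ) × Γ => κ2 p.2.2 i j) 2 P := by
      intro i j
      have h := hκ2 i j
      rw [← hmarg] at h
      exact (memLp_map_measure_iff (hκ2meas i j).aestronglyMeasurable
        hprojm.aemeasurable).mp h
    have hgw1P : ∀ j, MemLp (fun p : (Fin n → ℝ) × (Fin n → ℝ) × Γ =>
        ∑ i, w i * κ1 p.2.2 i j) 2 P :=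
      fun j => memLp_finset_sum _ (fun i _ => (hκ1P i j).const_mul (w i))
    have hgw2P : ∀ j, MemLp (fun p : (Fin n → ℝ) × (Fin n → ℝ) × Γ =>
        ∑ i, w i * κ2 p.2.2 i j) 2 P :=
      fun j => memLp_finset_sum _ (fun i _ => (hκ2P i j).const_mul (w i))
    have hprod1 : ∀ i j, Integrable (fun p : (Fin n → ℝ) × (Fin n → ℝ) × Γ =>
        κ1 p.2.2 i j * p.1 j) P := fun i j => l2_mul_integrable (hκ1P i j) (hz1L2 j)
    have hprod2 : ∀ i j, Integrable (fun p : (Fin n → ℝ) × (Fin n → ℝ) × Γ =>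
        κ2 p.2.2 i j * p.2.1 j) P := fun i j => l2_mul_integrable (hκ2P i j) (hz2L2 j)
    have hRint : Integrable (fun p : (Fin n → ℝ) × (Fin n → ℝ) × Γ =>
        (∑ j, (∑ i, w i * κ1 p.2.2 i j) * p.1 j)
        + ∑ j, (∑ i, w i * κ2 p.2.2 i j) * p.2.1 j) P :=
      (integrable_finset_sum _ fun j _ => l2_mul_integrable (hgw1P j) (hz1L2 j)).add
        (integrable_finset_sum _ fun j _ => l2_mul_integrable (hgw2P j) (hz2L2 j))
    refine ⟨hRint, ?_⟩
    have hcP : ∀ i, Integrable (fun p : (Fin n → ℝ) × (Fin n → ℝ) × Γ => c p.2.2 i) P := by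
      intro i
      have h := hcint i
      rw [← hmarg] at h
      exact (integrable_map_measure (hcmeas i).aestronglyMeasurable
        hprojm.aemeasurable).mp h
    have hcPint : ∀ i, ∫ p : (Fin n → ℝ) × (Fin n → ℝ) × Γ, c p.2.2 i ∂P = cb i := by
      intro i
      show _ = ∫ γ, c γ i ∂π
      rw [← hmarg, integral_map hprojm.aemeasurable (hcmeas i).aestronglyMeasurable]
    have hAi : ∀ i, v i - cb i = (∑ j, ∫ p : (Fin n → ℝ) × (Fin n → ℝ) × Γ,
        κ1 p.2.2 i j * p.1 j ∂P) + ∑ j, ∫ p : (Fin n → ℝ) × (Fin n → ℝ) × Γ,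
        κ2 p.2.2 i j * p.2.1 j ∂P := by
      intro i
      have hre : (fun p : (Fin n → ℝ) × (Fin n → ℝ) × Γ =>
          (c p.2.2 + κ1 p.2.2 *ᵥ p.1 + κ2 p.2.2 *ᵥ p.2.1) i)
          = fun p => c p.2.2 i + ((∑ j, κ1 p.2.2 i j * p.1 j)
            + ∑ j, κ2 p.2.2 i j * p.2.1 j) := by
        funext p
        simp [Matrix.mulVec, dotProduct, add_assoc]
      have hI1 : Integrable (fun p : (Fin n → ℝ) × (Fin n → ℝ) × Γ =>
          ∑ j, κ1 p.2.2 i j * p.1 j) P := integrable_finset_sum _ fun j _ => hprod1 i j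
      have hI2 : Integrable (fun p : (Fin n → ℝ) × (Fin n → ℝ) × Γ =>
          ∑ j, κ2 p.2.2 i j * p.2.1 j) P := integrable_finset_sum _ fun j _ => hprod2 i j
      have hI12 : Integrable (fun p : (Fin n → ℝ) × (Fin n → ℝ) × Γ =>
          (∑ j, κ1 p.2.2 i j * p.1 j) + ∑ j, κ2 p.2.2 i j * p.2.1 j) P := hI1.add hI2
      have h0 := hdrift i
      rw [hre, integral_add (hcP i) hI12, integral_add hI1 hI2,
        integral_finset_sum _ (fun j _ => hprod1 i j),
        integral_finset_sum _ (fun j _ => hprod2 i j), hcPint i] at h0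
      linarith
    calc ∑ i, w i * (v i - cb i)
        = ∑ i, ((∑ j, ∫ p : (Fin n → ℝ) × (Fin n → ℝ) × Γ,
            w i * (κ1 p.2.2 i j * p.1 j) ∂P)
          + ∑ j, ∫ p : (Fin n → ℝ) × (Fin n → ℝ) × Γ,
            w i * (κ2 p.2.2 i j * p.2.1 j) ∂P) := by
          refine Finset.sum_congr rfl fun i _ => ?_
          rw [hAi i, mul_add, Finset.mul_sum, Finset.mul_sum]
          congr 1 <;> exact Finset.sum_congr rfl fun j _ => (integral_const_mul _ _).symm
      _ = (∑ j, ∑ i, ∫ p : (Fin n → ℝ) × (Fin n → ℝ) × Γ,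
            w i * (κ1 p.2.2 i j * p.1 j) ∂P)
          + ∑ j, ∑ i, ∫ p : (Fin n → ℝ) × (Fin n → ℝ) × Γ,
            w i * (κ2 p.2.2 i j * p.2.1 j) ∂P := by
          rw [Finset.sum_add_distrib, Finset.sum_comm (f := fun i j =>
            ∫ p : (Fin n → ℝ) × (Fin n → ℝ) × Γ, w i * (κ1 p.2.2 i j * p.1 j) ∂P),
            Finset.sum_comm (f := fun i j =>
            ∫ p : (Fin n → ℝ) × (Fin n → ℝ) × Γ, w i * (κ2 p.2.2 i j * p.2.1 j) ∂P)]
      _ = (∑ j, ∫ p : (Fin n → ℝ) × (Fin n → ℝ) × Γ,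
            (∑ i, w i * κ1 p.2.2 i j) * p.1 j ∂P)
          + ∑ j, ∫ p : (Fin n → ℝ) × (Fin n → ℝ) × Γ,
            (∑ i, w i * κ2 p.2.2 i j) * p.2.1 j ∂P := by
          congr 1 <;> refine Finset.sum_congr rfl fun j _ => ?_
          · rw [← integral_finset_sum _ (fun i _ => (hprod1 i j).const_mul (w i))]
            refine integral_congr_ae (Filter.Eventually.of_forall fun p => ?_)
            show ∑ i, w i * (κ1 p.2.2 i j * p.1 j) = (∑ i, w i * κ1 p.2.2 i j) * p.1 j
            rw [Finset.sum_mul]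
            exact Finset.sum_congr rfl fun i _ => by ring
          · rw [← integral_finset_sum _ (fun i _ => (hprod2 i j).const_mul (w i))]
            refine integral_congr_ae (Filter.Eventually.of_forall fun p => ?_)
            show ∑ i, w i * (κ2 p.2.2 i j * p.2.1 j) = (∑ i, w i * κ2 p.2.2 i j) * p.2.1 j
            rw [Finset.sum_mul]
            exact Finset.sum_congr rfl fun i _ => by ring
      _ = _ := by
          rw [← integral_finset_sum _ (fun j _ => l2_mul_integrable (hgw1P j) (hz1L2 j)),
            ← integral_finset_sum _ (fun j _ => l2_mul_integrable (hgw2P j) (hz2L2 j)),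
            ← integral_add (integrable_finset_sum _ fun j _ =>
              l2_mul_integrable (hgw1P j) (hz1L2 j))
              (integrable_finset_sum _ fun j _ => l2_mul_integrable (hgw2P j) (hz2L2 j))]
  -- ordinary values are relaxed values
  have hOinR : So ⊆ Sr := by
    rintro a ⟨u1, u2, hu1m, hu2m, hu1L2, hu2L2, hconstr, hval⟩
    have hu1 : Measurable u1 := measurable_pi_lambda _ hu1m
    have hu2 : Measurable u2 := measurable_pi_lambda _ hu2m
    have hf : Measurable (fun γ => (u1 γ, u2 γ, γ) :
        Γ → (Fin n → ℝ) × (Fin n → ℝ) × Γ) :=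
      hu1.prodMk (hu2.prodMk measurable_id)
    refine ⟨π.map (fun γ => (u1 γ, u2 γ, γ)), Measure.isProbabilityMeasure_map hf.aemeasurable,
      ?_, ?_, ?_, ?_⟩
    · rw [Measure.map_map hprojm hf]
      exact Measure.map_id
    · rw [integrable_map_measure hQm.aestronglyMeasurable hf.aemeasurable]
      exact (integrable_finset_sum _ fun j _ => (hu1L2 j).integrable_sq).add
        (integrable_finset_sum _ fun j _ => (hu2L2 j).integrable_sq)
    · intro i
      rw [integral_map hf.aemeasurable ?hm]
      case hm =>
        have : Measurable (fun p : (Fin n → ℝ) × (Fin n → ℝ) × Γ =>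
            c p.2.2 i + ((∑ j, κ1 p.2.2 i j * p.1 j) + ∑ j, κ2 p.2.2 i j * p.2.1 j)) := by
          refine ((hcmeas i).comp hprojm).add (Measurable.add ?_ ?_)
          · exact Finset.measurable_sum _ fun j _ =>
              (((hκ1meas i j).comp hprojm).mul (hz1m j))
          · exact Finset.measurable_sum _ fun j _ =>
              (((hκ2meas i j).comp hprojm).mul (hz2m j))
        have heq : (fun p : (Fin n → ℝ) × (Fin n → ℝ) × Γ =>
            (c p.2.2 + κ1 p.2.2 *ᵥ p.1 + κ2 p.2.2 *ᵥ p.2.1) i)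
            = fun p => c p.2.2 i + ((∑ j, κ1 p.2.2 i j * p.1 j)
              + ∑ j, κ2 p.2.2 i j * p.2.1 j) := by
          funext p
          simp [Matrix.mulVec, dotProduct, add_assoc]
        rw [heq]
        exact this.aestronglyMeasurable
      exact hconstr i
    · rw [integral_map hf.aemeasurable hQm.aestronglyMeasurable]
      exact hval
  rcases Set.eq_empty_or_nonempty Sr with hSre | hSrne
  · have hSoe : So = ∅ := Set.eq_empty_iff_forall_notMem.mpr fun a ha =>
      Set.eq_empty_iff_forall_notMem.mp hSre a (hOinR ha)
    rw [hSre, hSoe]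
  · obtain ⟨a1, ha1⟩ := hSrne
    have hSrne' : Sr.Nonempty := ⟨a1, ha1⟩
    obtain ⟨P, hPprob, hmarg, hQint, hdrift, -⟩ := ha1
    -- solvability of the linear system
    have hd : ∀ w : Fin m → ℝ, M *ᵥ w = 0 → (fun i => v i - cb i) ⬝ᵥ w = 0 := by
      intro w hw
      have h0 : ∫ γ, ((∑ j, (∑ i, w i * κ1 γ i j) ^ 2)
          + ∑ j, (∑ i, w i * κ2 γ i j) ^ 2) ∂π = 0 := by
        rw [hB2 w, hw]
        simp
      have hae : ∀ᵐ γ ∂π, ((∑ j, (∑ i, w i * κ1 γ i j) ^ 2)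
          + ∑ j, (∑ i, w i * κ2 γ i j) ^ 2) = 0 := by
        have hnn : (0 : Γ → ℝ) ≤ fun γ => ((∑ j, (∑ i, w i * κ1 γ i j) ^ 2)
            + ∑ j, (∑ i, w i * κ2 γ i j) ^ 2) := fun γ => add_nonneg
          (Finset.sum_nonneg fun j _ => sq_nonneg _)
          (Finset.sum_nonneg fun j _ => sq_nonneg _)
        have := (integral_eq_zero_iff_of_nonneg hnn (hGint w)).mp h0
        filter_upwards [this] with γ hγ using hγ
      have haeg : ∀ᵐ γ ∂π, (∀ j, (∑ i, w i * κ1 γ i j) = 0)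
          ∧ ∀ j, (∑ i, w i * κ2 γ i j) = 0 := by
        filter_upwards [hae] with γ hγ
        have h1 : ∑ j, (∑ i, w i * κ1 γ i j) ^ 2 = 0 ∧
            ∑ j, (∑ i, w i * κ2 γ i j) ^ 2 = 0 := by
          constructor <;> nlinarith [Finset.sum_nonneg (fun j (_ : j ∈ Finset.univ) =>
              sq_nonneg (∑ i, w i * κ1 γ i j)),
            Finset.sum_nonneg (fun j (_ : j ∈ Finset.univ) =>
              sq_nonneg (∑ i, w i * κ2 γ i j))]
        constructor
        · intro j
          have := (Finset.sum_eq_zero_iff_of_nonneg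
            (fun j _ => sq_nonneg (∑ i, w i * κ1 γ i j))).mp h1.1 j (Finset.mem_univ j)
          exact pow_eq_zero_iff two_ne_zero |>.mp (by simpa using this)
        · intro j
          have := (Finset.sum_eq_zero_iff_of_nonneg
            (fun j _ => sq_nonneg (∑ i, w i * κ2 γ i j))).mp h1.2 j (Finset.mem_univ j)
          exact pow_eq_zero_iff two_ne_zero |>.mp (by simpa using this)
      have haeP : ∀ᵐ p ∂P, (∀ j, (∑ i, w i * κ1 p.2.2 i j) = 0)
          ∧ ∀ j, (∑ i, w i * κ2 p.2.2 i j) = 0 := by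
        rw [← hmarg] at haeg
        exact ae_of_ae_map hprojm.aemeasurable haeg
      have hDW := (hPblock P hPprob hmarg hQint hdrift w).2
      have hzero : ∫ p : (Fin n → ℝ) × (Fin n → ℝ) × Γ,
          ((∑ j, (∑ i, w i * κ1 p.2.2 i j) * p.1 j)
          + ∑ j, (∑ i, w i * κ2 p.2.2 i j) * p.2.1 j) ∂P = 0 := by
        rw [integral_congr_ae (g := fun _ => (0 : ℝ)) ?_, integral_zero]
        filter_upwards [haeP] with p hp
        show ((∑ j, (∑ i, w i * κ1 p.2.2 i j) * p.1 j)
          + ∑ j, (∑ i, w i * κ2 p.2.2 i j) * p.2.1 j) = 0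
        rw [Finset.sum_eq_zero fun j _ => by rw [hp.1 j, zero_mul],
          Finset.sum_eq_zero fun j _ => by rw [hp.2 j, zero_mul], add_zero]
      show ∑ i, (v i - cb i) * w i = 0
      rw [show ∑ i, (v i - cb i) * w i = ∑ i, w i * (v i - cb i) from
        Finset.sum_congr rfl fun i _ => mul_comm _ _, hDW, hzero]
    obtain ⟨lam, hMlam⟩ := exists_mulVec_eq M hMsymm _ hd
    -- the optimal ordinary control
    set u1 : Γ → Fin n → ℝ := fun γ j => ∑ i, lam i * κ1 γ i j with hu1def
    set u2 : Γ → Fin n → ℝ := fun γ j => ∑ i, lam i * κ2 γ i j with hu2def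
    set a0 : ℝ := (1 / 2) * ∫ γ, ((∑ j, (u1 γ j) ^ 2) + ∑ j, (u2 γ j) ^ 2) ∂π with ha0def
    have ha0val : a0 = (1 / 2) * ∑ i, lam i * (v i - cb i) := by
      rw [ha0def]
      simp only [hu1def, hu2def]
      rw [hB2 lam]
      simp only [hMlam]
    have ha0So : a0 ∈ So := by
      refine ⟨u1, u2, fun j => hg1m lam j, fun j => hg2m lam j,
        fun j => hg1L2 lam j, fun j => hg2L2 lam j, ?_, ha0def⟩
      intro i
      have hk1 : ∀ j, Integrable (fun γ => κ1 γ i j * (∑ k, lam k * κ1 γ k j)) π :=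
        fun j => l2_mul_integrable (hκ1 i j) (hg1L2 lam j)
      have hk2 : ∀ j, Integrable (fun γ => κ2 γ i j * (∑ k, lam k * κ2 γ k j)) π :=
        fun j => l2_mul_integrable (hκ2 i j) (hg2L2 lam j)
      have hI1 : Integrable (fun γ => ∑ j, κ1 γ i j * (∑ k, lam k * κ1 γ k j)) π :=
        integrable_finset_sum _ fun j _ => hk1 j
      have hI2 : Integrable (fun γ => ∑ j, κ2 γ i j * (∑ k, lam k * κ2 γ k j)) π :=
        integrable_finset_sum _ fun j _ => hk2 j
      have hI12 : Integrable (fun γ => (∑ j, κ1 γ i j * (∑ k, lam k * κ1 γ k j))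
          + ∑ j, κ2 γ i j * (∑ k, lam k * κ2 γ k j)) π := hI1.add hI2
      calc ∫ γ, (c γ + κ1 γ *ᵥ u1 γ + κ2 γ *ᵥ u2 γ) i ∂π
          = (∫ γ, c γ i ∂π) + ((∑ j, ∫ γ, κ1 γ i j * (∑ k, lam k * κ1 γ k j) ∂π)
            + ∑ j, ∫ γ, κ2 γ i j * (∑ k, lam k * κ2 γ k j) ∂π) := by
            rw [show (fun γ => (c γ + κ1 γ *ᵥ u1 γ + κ2 γ *ᵥ u2 γ) i)
                = fun γ => c γ i + ((∑ j, κ1 γ i j * (∑ k, lam k * κ1 γ k j))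
                  + ∑ j, κ2 γ i j * (∑ k, lam k * κ2 γ k j)) from funext fun γ => by
              simp [hu1def, hu2def, Matrix.mulVec, dotProduct, add_assoc],
              integral_add (hcint i) hI12, integral_add hI1 hI2,
              integral_finset_sum _ (fun j _ => hk1 j),
              integral_finset_sum _ (fun j _ => hk2 j)]
        _ = cb i + (M *ᵥ lam) i := by rw [hB1 lam i]
        _ = v i := by simp only [hMlam]; ring
    have hlb : ∀ b ∈ Sr, a0 ≤ b := by
      rintro b ⟨P', hP', hmarg', hQint', hdrift', hbval⟩
      obtain ⟨hRint', hDW'⟩ := hPblock P' hP' hmarg' hQint' hdrift' lam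
      have hGmeas : Measurable (fun γ => (∑ j, (∑ i, lam i * κ1 γ i j) ^ 2)
          + ∑ j, (∑ i, lam i * κ2 γ i j) ^ 2) :=
        (Finset.measurable_sum _ fun j _ => (hg1m lam j).pow_const 2).add
          (Finset.measurable_sum _ fun j _ => (hg2m lam j).pow_const 2)
      have hGcomp : Integrable (fun p : (Fin n → ℝ) × (Fin n → ℝ) × Γ =>
          (∑ j, (∑ i, lam i * κ1 p.2.2 i j) ^ 2)
          + ∑ j, (∑ i, lam i * κ2 p.2.2 i j) ^ 2) P' := by
        have h := hGint lam
        rw [← hmarg'] at h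
        exact (integrable_map_measure hGmeas.aestronglyMeasurable
          hprojm.aemeasurable).mp h
      have hGeq : ∫ p : (Fin n → ℝ) × (Fin n → ℝ) × Γ,
          ((∑ j, (∑ i, lam i * κ1 p.2.2 i j) ^ 2)
          + ∑ j, (∑ i, lam i * κ2 p.2.2 i j) ^ 2) ∂P'
          = ∑ i, lam i * (v i - cb i) := by
        have h : ∫ γ, ((∑ j, (∑ i, lam i * κ1 γ i j) ^ 2)
            + ∑ j, (∑ i, lam i * κ2 γ i j) ^ 2) ∂π = ∑ i, lam i * (v i - cb i) := by
          rw [hB2 lam]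
          simp only [hMlam]
        rw [← h, ← hmarg', integral_map hprojm.aemeasurable hGmeas.aestronglyMeasurable]
      have h2R : Integrable (fun p : (Fin n → ℝ) × (Fin n → ℝ) × Γ =>
          2 * ((∑ j, (∑ i, lam i * κ1 p.2.2 i j) * p.1 j)
          + ∑ j, (∑ i, lam i * κ2 p.2.2 i j) * p.2.1 j)) P' := hRint'.const_mul 2
      have h2RG : Integrable (fun p : (Fin n → ℝ) × (Fin n → ℝ) × Γ =>
          2 * ((∑ j, (∑ i, lam i * κ1 p.2.2 i j) * p.1 j)
          + ∑ j, (∑ i, lam i * κ2 p.2.2 i j) * p.2.1 j)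
          - ((∑ j, (∑ i, lam i * κ1 p.2.2 i j) ^ 2)
          + ∑ j, (∑ i, lam i * κ2 p.2.2 i j) ^ 2)) P' := h2R.sub hGcomp
      have hpt : ∀ p : (Fin n → ℝ) × (Fin n → ℝ) × Γ,
          2 * ((∑ j, (∑ i, lam i * κ1 p.2.2 i j) * p.1 j)
          + ∑ j, (∑ i, lam i * κ2 p.2.2 i j) * p.2.1 j)
          - ((∑ j, (∑ i, lam i * κ1 p.2.2 i j) ^ 2)
          + ∑ j, (∑ i, lam i * κ2 p.2.2 i j) ^ 2)
          ≤ (∑ i, (p.1 i) ^ 2) + ∑ i, (p.2.1 i) ^ 2 := by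
        intro p
        have key1 : ∀ j, 2 * ((∑ i, lam i * κ1 p.2.2 i j) * p.1 j)
            - (∑ i, lam i * κ1 p.2.2 i j) ^ 2 ≤ (p.1 j) ^ 2 := fun j => by
          nlinarith [sq_nonneg (p.1 j - ∑ i, lam i * κ1 p.2.2 i j)]
        have key2 : ∀ j, 2 * ((∑ i, lam i * κ2 p.2.2 i j) * p.2.1 j)
            - (∑ i, lam i * κ2 p.2.2 i j) ^ 2 ≤ (p.2.1 j) ^ 2 := fun j => by
          nlinarith [sq_nonneg (p.2.1 j - ∑ i, lam i * κ2 p.2.2 i j)]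
        calc 2 * ((∑ j, (∑ i, lam i * κ1 p.2.2 i j) * p.1 j)
            + ∑ j, (∑ i, lam i * κ2 p.2.2 i j) * p.2.1 j)
            - ((∑ j, (∑ i, lam i * κ1 p.2.2 i j) ^ 2)
            + ∑ j, (∑ i, lam i * κ2 p.2.2 i j) ^ 2)
            = (∑ j, (2 * ((∑ i, lam i * κ1 p.2.2 i j) * p.1 j)
              - (∑ i, lam i * κ1 p.2.2 i j) ^ 2))
              + ∑ j, (2 * ((∑ i, lam i * κ2 p.2.2 i j) * p.2.1 j)
              - (∑ i, lam i * κ2 p.2.2 i j) ^ 2) := by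
              rw [Finset.sum_sub_distrib, Finset.sum_sub_distrib,
                ← Finset.mul_sum, ← Finset.mul_sum]
              ring
          _ ≤ (∑ i, (p.1 i) ^ 2) + ∑ i, (p.2.1 i) ^ 2 :=
              add_le_add (Finset.sum_le_sum fun j _ => key1 j)
                (Finset.sum_le_sum fun j _ => key2 j)
      have hmono := integral_mono h2RG hQint' hpt
      have hLHS : ∫ p : (Fin n → ℝ) × (Fin n → ℝ) × Γ,
          (2 * ((∑ j, (∑ i, lam i * κ1 p.2.2 i j) * p.1 j)
          + ∑ j, (∑ i, lam i * κ2 p.2.2 i j) * p.2.1 j)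
          - ((∑ j, (∑ i, lam i * κ1 p.2.2 i j) ^ 2)
          + ∑ j, (∑ i, lam i * κ2 p.2.2 i j) ^ 2)) ∂P'
          = ∑ i, lam i * (v i - cb i) := by
        rw [integral_sub h2R hGcomp, integral_const_mul, ← hDW', hGeq]
        ring
      rw [hLHS] at hmono
      rw [hbval, ha0val]
      linarith
    have h1 : sInf Sr = a0 :=
      le_antisymm (csInf_le ⟨a0, hlb⟩ (hOinR ha0So)) (le_csInf hSrne' hlb)
    have h2 : sInf So = a0 :=
      le_antisymm (csInf_le ⟨a0, fun b hb => hlb b (hOinR hb)⟩ ha0So)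
        (le_csInf ⟨a0, ha0So⟩ fun b hb => hlb b (hOinR hb))
    rw [h1, h2]
end

section
/- Let $(\Gamma, \mathcal{G}, \pi)$ be a standard Borel probability space, $m, n$ positive integers, $\kappa_1, \kappa_2 : \Gamma \to \mathbb{R}^{m \times n}$ square-integrable, and $c : \Gamma \to \mathbb{R}^{m}$ integrable. Assume $q = \mathrm{E}^{\pi}[\kappa_1\kappa_1^{T}+\kappa_2\kappa_2^{T}]$ is invertible and set $\bar c = \mathrm{E}^{\pi}[c]$. Then for every $v\in\mathbb{R}^{m}$, the relaxed value $L^{r}(v) = \inf \tfrac12\int(\|z_1\|^2+\|z_2\|^2)dP$ — the infimum over probability measures $P$ on $\mathbb{R}^{n}\times\mathbb{R}^{n}\times\Gamma$ with $\Gamma$-marginal $\pi$, finite second moments, and $\int(c+\kappa_1 z_1+\kappa_2 z_2)dP = v$ — equals $\tfrac12 (v - \bar c)^{T} q^{-1} (v - \bar c)$. -/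
open MeasureTheory Matrix

section helpers

variable {Γ : Type*} [MeasurableSpace Γ] {μ : Measure Γ}

lemma mem2_int_mul {f g : Γ → ℝ} (hf : MemLp f 2 μ) (hg : MemLp g 2 μ) :
    Integrable (fun x => f x * g x) μ := by
  have h2 : Integrable (fun x => ((f x) ^ 2 + (g x) ^ 2) / 2) μ :=
    (hf.integrable_sq.add hg.integrable_sq).div_const 2
  refine h2.mono' (hf.aestronglyMeasurable.mul hg.aestronglyMeasurable)
    (Filter.Eventually.of_forall fun x => ?_)
  rw [Real.norm_eq_abs, abs_mul]
  nlinarith [sq_abs (f x), sq_abs (g x), sq_nonneg (|f x| - |g x|),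
    abs_nonneg (f x), abs_nonneg (g x)]

lemma sum_swap_mul {m n : ℕ} (κ : Matrix (Fin m) (Fin n) ℝ) (l : Fin m → ℝ) (z : Fin n → ℝ) :
    ∑ i, l i * (κ *ᵥ z) i = ∑ j, (∑ i, κ i j * l i) * z j := by
  simp only [Matrix.mulVec, dotProduct, Finset.mul_sum, Finset.sum_mul]
  rw [Finset.sum_comm]
  exact Finset.sum_congr rfl fun j _ => Finset.sum_congr rfl fun i _ => by ring

lemma sum_sq_eq {m n : ℕ} (κ : Matrix (Fin m) (Fin n) ℝ) (l : Fin m → ℝ) :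
    ∑ j, (∑ i, κ i j * l i) ^ 2 = ∑ i, ∑ i', (l i * l i') * (κ * κᵀ) i i' := by
  simp only [Matrix.mul_apply, Matrix.transpose_apply, pow_two, Finset.sum_mul, Finset.mul_sum]
  rw [Finset.sum_comm]
  refine Finset.sum_congr rfl fun i _ => ?_
  rw [Finset.sum_comm]
  exact Finset.sum_congr rfl fun i' _ => Finset.sum_congr rfl fun j _ => by ring

lemma dot_le_half {n : ℕ} (a z : Fin n → ℝ) :
    ∑ j, a j * z j ≤ ((∑ j, (a j) ^ 2) + ∑ j, (z j) ^ 2) / 2 := by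
  have h : ∀ j ∈ Finset.univ, a j * z j ≤ ((a j) ^ 2 + (z j) ^ 2) / 2 :=
    fun j _ => by nlinarith [sq_nonneg (a j - z j)]
  calc ∑ j, a j * z j ≤ ∑ j, ((a j) ^ 2 + (z j) ^ 2) / 2 := Finset.sum_le_sum h
    _ = _ := by rw [← Finset.sum_div, Finset.sum_add_distrib]

end helpers

set_option maxHeartbeats 1000000 in
/-- Explicit evaluation of the relaxed local rate function: when
`q = E^π[κ₁κ₁ᵀ + κ₂κ₂ᵀ]` is invertible, the infimum of `½∫(‖z₁‖²+‖z₂‖²)dP`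
over relaxed controls with mean drift `v` equals
`½ (v - c̄)ᵀ q⁻¹ (v - c̄)` where `c̄ = E^π[c]`. -/
theorem relaxed_local_rate_explicit
    {Γ : Type*} [MeasurableSpace Γ] [StandardBorelSpace Γ]
    (π : Measure Γ) [IsProbabilityMeasure π]
    (m n : ℕ) (hm : 0 < m) (hn : 0 < n)
    (κ1 κ2 : Γ → Matrix (Fin m) (Fin n) ℝ)
    (hκ1meas : ∀ i j, Measurable fun γ => κ1 γ i j)
    (hκ2meas : ∀ i j, Measurable fun γ => κ2 γ i j)
    (hκ1 : ∀ i j, MemLp (fun γ => κ1 γ i j) 2 π)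
    (hκ2 : ∀ i j, MemLp (fun γ => κ2 γ i j) 2 π)
    (c : Γ → Fin m → ℝ)
    (hcmeas : ∀ i, Measurable fun γ => c γ i)
    (hcint : ∀ i, Integrable (fun γ => c γ i) π)
    (q : Matrix (Fin m) (Fin m) ℝ)
    (hq : ∀ i j, q i j = ∫ γ, ((κ1 γ * (κ1 γ)ᵀ) i j + (κ2 γ * (κ2 γ)ᵀ) i j) ∂π)
    (hqinv : IsUnit q.det)
    (cbar : Fin m → ℝ)
    (hcbar : ∀ i, cbar i = ∫ γ, c γ i ∂π)
    (v : Fin m → ℝ) :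
    sInf { a : ℝ | ∃ P : Measure ((Fin n → ℝ) × (Fin n → ℝ) × Γ),
        IsProbabilityMeasure P ∧
        P.map (fun p => p.2.2) = π ∧
        Integrable (fun p : (Fin n → ℝ) × (Fin n → ℝ) × Γ =>
          (∑ i, (p.1 i) ^ 2) + ∑ i, (p.2.1 i) ^ 2) P ∧
        (∀ i, (∫ p : (Fin n → ℝ) × (Fin n → ℝ) × Γ,
            (c p.2.2 + κ1 p.2.2 *ᵥ p.1 + κ2 p.2.2 *ᵥ p.2.1) i ∂P) = v i) ∧
        a = (1 / 2) * ∫ p : (Fin n → ℝ) × (Fin n → ℝ) × Γ,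
          ((∑ i, (p.1 i) ^ 2) + ∑ i, (p.2.1 i) ^ 2) ∂P }
    = (1 / 2) * ((v - cbar) ⬝ᵥ (q⁻¹ *ᵥ (v - cbar))) := by
  classical
  set w : Fin m → ℝ := v - cbar with hw
  set l : Fin m → ℝ := q⁻¹ *ᵥ w with hl
  have hql : q *ᵥ l = w := by
    rw [hl, Matrix.mulVec_mulVec, Matrix.mul_nonsing_inv q hqinv, Matrix.one_mulVec]
  set t : ℝ := l ⬝ᵥ w with ht
  -- entrywise integrability of κκᵀ
  have hA1 : ∀ i i', Integrable (fun γ => (κ1 γ * (κ1 γ)ᵀ) i i') π := by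
    intro i i'
    simp only [Matrix.mul_apply, Matrix.transpose_apply]
    exact integrable_finset_sum _ fun j _ => mem2_int_mul (hκ1 i j) (hκ1 i' j)
  have hA2 : ∀ i i', Integrable (fun γ => (κ2 γ * (κ2 γ)ᵀ) i i') π := by
    intro i i'
    simp only [Matrix.mul_apply, Matrix.transpose_apply]
    exact integrable_finset_sum _ fun j _ => mem2_int_mul (hκ2 i j) (hκ2 i' j)
  have hAq : ∀ i i',
      Integrable (fun γ => (κ1 γ * (κ1 γ)ᵀ) i i' + (κ2 γ * (κ2 γ)ᵀ) i i') π :=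
    fun i i' => (hA1 i i').add (hA2 i i')
  -- the optimal controls and their energy
  set g1 : Γ → Fin n → ℝ := fun γ j => ∑ i, κ1 γ i j * l i with hg1
  set g2 : Γ → Fin n → ℝ := fun γ j => ∑ i, κ2 γ i j * l i with hg2
  set G : Γ → ℝ := fun γ => (∑ j, (g1 γ j) ^ 2) + ∑ j, (g2 γ j) ^ 2 with hG
  have hGeq : ∀ γ, G γ = ∑ i, ∑ i',
      (l i * l i') * ((κ1 γ * (κ1 γ)ᵀ) i i' + (κ2 γ * (κ2 γ)ᵀ) i i') := by
    intro γ
    simp only [hG, hg1, hg2, sum_sq_eq, ← Finset.sum_add_distrib, mul_add]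
  have hGmeas : Measurable G := by
    have m1 : Measurable fun γ => ∑ j, (g1 γ j) ^ 2 :=
      Finset.measurable_sum _ fun j _ =>
        (Finset.measurable_sum _ fun i _ => (hκ1meas i j).mul_const _).pow_const 2
    have m2 : Measurable fun γ => ∑ j, (g2 γ j) ^ 2 :=
      Finset.measurable_sum _ fun j _ =>
        (Finset.measurable_sum _ fun i _ => (hκ2meas i j).mul_const _).pow_const 2
    exact m1.add m2
  have hGint : Integrable G π := by
    rw [show G = fun γ => ∑ i, ∑ i',
        (l i * l i') * ((κ1 γ * (κ1 γ)ᵀ) i i' + (κ2 γ * (κ2 γ)ᵀ) i i') from funext hGeq]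
    exact integrable_finset_sum _ fun i _ => integrable_finset_sum _ fun i' _ =>
      (hAq i i').const_mul _
  have hGval : ∫ γ, G γ ∂π = t := by
    rw [show G = fun γ => ∑ i, ∑ i',
        (l i * l i') * ((κ1 γ * (κ1 γ)ᵀ) i i' + (κ2 γ * (κ2 γ)ᵀ) i i') from funext hGeq]
    rw [integral_finset_sum _ fun i _ => integrable_finset_sum _ fun i' _ =>
      (hAq i i').const_mul _]
    have : ∀ i, ∫ γ, ∑ i', (l i * l i') *
        ((κ1 γ * (κ1 γ)ᵀ) i i' + (κ2 γ * (κ2 γ)ᵀ) i i') ∂π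
        = ∑ i', (l i * l i') * q i i' := by
      intro i
      rw [integral_finset_sum _ fun i' _ => (hAq i i').const_mul _]
      exact Finset.sum_congr rfl fun i' _ => by rw [integral_const_mul, ← hq]
    simp_rw [this]
    have h2 : ∑ i, ∑ i', (l i * l i') * q i i' = l ⬝ᵥ (q *ᵥ l) := by
      simp only [dotProduct, Matrix.mulVec, Finset.mul_sum]
      exact Finset.sum_congr rfl fun i _ => Finset.sum_congr rfl fun i' _ => by ring
    rw [h2, hql, ht]
  -- lower bound
  have hlb : ∀ b ∈ { a : ℝ | ∃ P : Measure ((Fin n → ℝ) × (Fin n → ℝ) × Γ),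
        IsProbabilityMeasure P ∧
        P.map (fun p => p.2.2) = π ∧
        Integrable (fun p : (Fin n → ℝ) × (Fin n → ℝ) × Γ =>
          (∑ i, (p.1 i) ^ 2) + ∑ i, (p.2.1 i) ^ 2) P ∧
        (∀ i, (∫ p : (Fin n → ℝ) × (Fin n → ℝ) × Γ,
            (c p.2.2 + κ1 p.2.2 *ᵥ p.1 + κ2 p.2.2 *ᵥ p.2.1) i ∂P) = v i) ∧
        a = (1 / 2) * ∫ p : (Fin n → ℝ) × (Fin n → ℝ) × Γ,
          ((∑ i, (p.1 i) ^ 2) + ∑ i, (p.2.1 i) ^ 2) ∂P }, (1 / 2) * t ≤ b := by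
    rintro b ⟨P, hPprob, hmarg, hΦint, hmean, rfl⟩
    have hproj : Measurable (fun p : (Fin n → ℝ) × (Fin n → ℝ) × Γ => p.2.2) :=
      measurable_snd.snd
    have hint_tr : ∀ (g : Γ → ℝ), Measurable g → Integrable g π →
        Integrable (fun p : (Fin n → ℝ) × (Fin n → ℝ) × Γ => g p.2.2) P := by
      intro g hg hgint
      have h1 : Integrable g (P.map (fun p => p.2.2)) := hmarg ▸ hgint
      exact (integrable_map_measure (hmarg ▸ hg.aestronglyMeasurable)
        hproj.aemeasurable).1 h1
    have hval_tr : ∀ (g : Γ → ℝ), Measurable g →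
        ∫ p : (Fin n → ℝ) × (Fin n → ℝ) × Γ, g p.2.2 ∂P = ∫ γ, g γ ∂π := by
      intro g hg
      rw [← hmarg, integral_map hproj.aemeasurable (hmarg ▸ hg.aestronglyMeasurable)]
    have hz1sq : ∀ j, Integrable (fun p : (Fin n → ℝ) × (Fin n → ℝ) × Γ => (p.1 j) ^ 2) P := by
      intro j
      refine hΦint.mono' (((measurable_pi_apply j).comp
        measurable_fst).pow_const 2).aestronglyMeasurable
        (Filter.Eventually.of_forall fun p => ?_)
      rw [Real.norm_eq_abs, abs_of_nonneg (sq_nonneg _)]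
      have h1 : (p.1 j) ^ 2 ≤ ∑ i, (p.1 i) ^ 2 :=
        Finset.single_le_sum (f := fun i => (p.1 i) ^ 2) (fun i _ => sq_nonneg _)
          (Finset.mem_univ j)
      have h2 : (0:ℝ) ≤ ∑ i, (p.2.1 i) ^ 2 := Finset.sum_nonneg fun i _ => sq_nonneg _
      linarith
    have hz2sq : ∀ j, Integrable (fun p : (Fin n → ℝ) × (Fin n → ℝ) × Γ => (p.2.1 j) ^ 2) P := by
      intro j
      refine hΦint.mono' (((measurable_pi_apply j).comp
        (measurable_fst.comp measurable_snd)).pow_const 2).aestronglyMeasurable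
        (Filter.Eventually.of_forall fun p => ?_)
      rw [Real.norm_eq_abs, abs_of_nonneg (sq_nonneg _)]
      have h1 : (p.2.1 j) ^ 2 ≤ ∑ i, (p.2.1 i) ^ 2 :=
        Finset.single_le_sum (f := fun i => (p.2.1 i) ^ 2) (fun i _ => sq_nonneg _)
          (Finset.mem_univ j)
      have h2 : (0:ℝ) ≤ ∑ i, (p.1 i) ^ 2 := Finset.sum_nonneg fun i _ => sq_nonneg _
      linarith
    have hprod1 : ∀ i j, Integrable
        (fun p : (Fin n → ℝ) × (Fin n → ℝ) × Γ => κ1 p.2.2 i j * p.1 j) P := by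
      intro i j
      have hk2 : Integrable (fun p : (Fin n → ℝ) × (Fin n → ℝ) × Γ => (κ1 p.2.2 i j) ^ 2) P :=
        hint_tr _ ((hκ1meas i j).pow_const 2) (hκ1 i j).integrable_sq
      refine ((hk2.add (hz1sq j)).div_const 2).mono'
        (((hκ1meas i j).comp hproj).mul
          ((measurable_pi_apply j).comp measurable_fst)).aestronglyMeasurable
        (Filter.Eventually.of_forall fun p => ?_)
      simp only [Pi.add_apply]
      rw [Real.norm_eq_abs, abs_mul]
      nlinarith [sq_abs (κ1 p.2.2 i j), sq_abs (p.1 j),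
        sq_nonneg (|κ1 p.2.2 i j| - |p.1 j|), abs_nonneg (κ1 p.2.2 i j), abs_nonneg (p.1 j)]
    have hprod2 : ∀ i j, Integrable
        (fun p : (Fin n → ℝ) × (Fin n → ℝ) × Γ => κ2 p.2.2 i j * p.2.1 j) P := by
      intro i j
      have hk2 : Integrable (fun p : (Fin n → ℝ) × (Fin n → ℝ) × Γ => (κ2 p.2.2 i j) ^ 2) P :=
        hint_tr _ ((hκ2meas i j).pow_const 2) (hκ2 i j).integrable_sq
      refine ((hk2.add (hz2sq j)).div_const 2).mono'
        (((hκ2meas i j).comp hproj).mul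
          ((measurable_pi_apply j).comp (measurable_fst.comp measurable_snd))).aestronglyMeasurable
        (Filter.Eventually.of_forall fun p => ?_)
      simp only [Pi.add_apply]
      rw [Real.norm_eq_abs, abs_mul]
      nlinarith [sq_abs (κ2 p.2.2 i j), sq_abs (p.2.1 j),
        sq_nonneg (|κ2 p.2.2 i j| - |p.2.1 j|), abs_nonneg (κ2 p.2.2 i j), abs_nonneg (p.2.1 j)]
    have hmv1 : ∀ i, Integrable
        (fun p : (Fin n → ℝ) × (Fin n → ℝ) × Γ => (κ1 p.2.2 *ᵥ p.1) i) P := by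
      intro i
      have he : (fun p : (Fin n → ℝ) × (Fin n → ℝ) × Γ => (κ1 p.2.2 *ᵥ p.1) i)
          = fun p => ∑ j, κ1 p.2.2 i j * p.1 j := by
        funext p; simp [Matrix.mulVec, dotProduct]
      rw [he]
      exact integrable_finset_sum _ fun j _ => hprod1 i j
    have hmv2 : ∀ i, Integrable
        (fun p : (Fin n → ℝ) × (Fin n → ℝ) × Γ => (κ2 p.2.2 *ᵥ p.2.1) i) P := by
      intro i
      have he : (fun p : (Fin n → ℝ) × (Fin n → ℝ) × Γ => (κ2 p.2.2 *ᵥ p.2.1) i)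
          = fun p => ∑ j, κ2 p.2.2 i j * p.2.1 j := by
        funext p; simp [Matrix.mulVec, dotProduct]
      rw [he]
      exact integrable_finset_sum _ fun j _ => hprod2 i j
    have hmv12 : ∀ i, Integrable (fun p : (Fin n → ℝ) × (Fin n → ℝ) × Γ =>
        (κ1 p.2.2 *ᵥ p.1) i + (κ2 p.2.2 *ᵥ p.2.1) i) P :=
      fun i => (hmv1 i).add (hmv2 i)
    have hcP : ∀ i, Integrable
        (fun p : (Fin n → ℝ) × (Fin n → ℝ) × Γ => c p.2.2 i) P :=
      fun i => hint_tr _ (hcmeas i) (hcint i)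
    have hdrift : ∀ i, ∫ p : (Fin n → ℝ) × (Fin n → ℝ) × Γ,
        ((κ1 p.2.2 *ᵥ p.1) i + (κ2 p.2.2 *ᵥ p.2.1) i) ∂P = w i := by
      intro i
      have h0 := hmean i
      have hre : (fun p : (Fin n → ℝ) × (Fin n → ℝ) × Γ =>
          (c p.2.2 + κ1 p.2.2 *ᵥ p.1 + κ2 p.2.2 *ᵥ p.2.1) i)
          = fun p => c p.2.2 i + ((κ1 p.2.2 *ᵥ p.1) i + (κ2 p.2.2 *ᵥ p.2.1) i) := by
        funext p; simp [Pi.add_apply]; ring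
      rw [hre, integral_add (hcP i) (hmv12 i)] at h0
      have hc0 : ∫ p : (Fin n → ℝ) × (Fin n → ℝ) × Γ, c p.2.2 i ∂P = cbar i := by
        rw [hval_tr _ (hcmeas i), hcbar]
      rw [hc0] at h0
      have : w i = v i - cbar i := by simp [hw]
      linarith
    -- the test function u
    have huint : Integrable (fun p : (Fin n → ℝ) × (Fin n → ℝ) × Γ =>
        ∑ i, l i * ((κ1 p.2.2 *ᵥ p.1) i + (κ2 p.2.2 *ᵥ p.2.1) i)) P :=
      integrable_finset_sum _ fun i _ => ((hmv12 i).const_mul (l i))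
    have huval : ∫ p : (Fin n → ℝ) × (Fin n → ℝ) × Γ,
        ∑ i, l i * ((κ1 p.2.2 *ᵥ p.1) i + (κ2 p.2.2 *ᵥ p.2.1) i) ∂P = t := by
      rw [integral_finset_sum _ fun i _ => ((hmv12 i).const_mul (l i))]
      have : ∀ i, ∫ p : (Fin n → ℝ) × (Fin n → ℝ) × Γ,
          l i * ((κ1 p.2.2 *ᵥ p.1) i + (κ2 p.2.2 *ᵥ p.2.1) i) ∂P = l i * w i := by
        intro i
        rw [integral_const_mul, hdrift i]
      simp_rw [this]
      rfl
    have hGP : Integrable (fun p : (Fin n → ℝ) × (Fin n → ℝ) × Γ => G p.2.2) P :=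
      hint_tr G hGmeas hGint
    have hGPval : ∫ p : (Fin n → ℝ) × (Fin n → ℝ) × Γ, G p.2.2 ∂P = t := by
      rw [hval_tr G hGmeas, hGval]
    have hbound : ∀ p : (Fin n → ℝ) × (Fin n → ℝ) × Γ,
        ∑ i, l i * ((κ1 p.2.2 *ᵥ p.1) i + (κ2 p.2.2 *ᵥ p.2.1) i)
        ≤ (G p.2.2 + ((∑ i, (p.1 i) ^ 2) + ∑ i, (p.2.1 i) ^ 2)) / 2 := by
      intro p
      have h1 : ∑ i, l i * ((κ1 p.2.2 *ᵥ p.1) i + (κ2 p.2.2 *ᵥ p.2.1) i)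
          = (∑ j, g1 p.2.2 j * p.1 j) + ∑ j, g2 p.2.2 j * p.2.1 j := by
        simp only [mul_add, Finset.sum_add_distrib]
        rw [sum_swap_mul, sum_swap_mul]
      rw [h1]
      have h2 := dot_le_half (g1 p.2.2) p.1
      have h3 := dot_le_half (g2 p.2.2) p.2.1
      have hGexp : G p.2.2 = (∑ j, (g1 p.2.2 j) ^ 2) + ∑ j, (g2 p.2.2 j) ^ 2 := rfl
      rw [hGexp]
      linarith
    have hmono : ∫ p : (Fin n → ℝ) × (Fin n → ℝ) × Γ,
        ∑ i, l i * ((κ1 p.2.2 *ᵥ p.1) i + (κ2 p.2.2 *ᵥ p.2.1) i) ∂P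
        ≤ ∫ p : (Fin n → ℝ) × (Fin n → ℝ) × Γ,
          (G p.2.2 + ((∑ i, (p.1 i) ^ 2) + ∑ i, (p.2.1 i) ^ 2)) / 2 ∂P :=
      integral_mono huint (Integrable.div_const (by exact hGP.add hΦint) 2) hbound
    rw [huval] at hmono
    rw [integral_div, integral_add hGP hΦint, hGPval] at hmono
    have : t ≤ ∫ p : (Fin n → ℝ) × (Fin n → ℝ) × Γ,
        ((∑ i, (p.1 i) ^ 2) + ∑ i, (p.2.1 i) ^ 2) ∂P := by linarith
    linarith
  -- the optimal measure
  have hg1m : Measurable g1 := by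
    apply measurable_pi_lambda
    intro j
    exact Finset.measurable_sum _ fun i _ => (hκ1meas i j).mul_const _
  have hg2m : Measurable g2 := by
    apply measurable_pi_lambda
    intro j
    exact Finset.measurable_sum _ fun i _ => (hκ2meas i j).mul_const _
  set f : Γ → (Fin n → ℝ) × (Fin n → ℝ) × Γ := fun γ => (g1 γ, g2 γ, γ) with hf
  have hfm : Measurable f := hg1m.prod (hg2m.prod measurable_id)
  have hfe : MeasurableEmbedding f :=
    hfm.measurableEmbedding (fun a b h => congrArg (fun p => p.2.2) h)
  have hmemK : (1 / 2) * t ∈ { a : ℝ | ∃ P : Measure ((Fin n → ℝ) × (Fin n → ℝ) × Γ),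
        IsProbabilityMeasure P ∧
        P.map (fun p => p.2.2) = π ∧
        Integrable (fun p : (Fin n → ℝ) × (Fin n → ℝ) × Γ =>
          (∑ i, (p.1 i) ^ 2) + ∑ i, (p.2.1 i) ^ 2) P ∧
        (∀ i, (∫ p : (Fin n → ℝ) × (Fin n → ℝ) × Γ,
            (c p.2.2 + κ1 p.2.2 *ᵥ p.1 + κ2 p.2.2 *ᵥ p.2.1) i ∂P) = v i) ∧
        a = (1 / 2) * ∫ p : (Fin n → ℝ) × (Fin n → ℝ) × Γ,
          ((∑ i, (p.1 i) ^ 2) + ∑ i, (p.2.1 i) ^ 2) ∂P } := by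
    refine ⟨π.map f, Measure.isProbabilityMeasure_map hfm.aemeasurable, ?_, ?_, ?_, ?_⟩
    · rw [Measure.map_map (measurable_snd.snd) hfm]
      have : ((fun p : (Fin n → ℝ) × (Fin n → ℝ) × Γ => p.2.2) ∘ f) = id := rfl
      rw [this, Measure.map_id]
    · rw [hfe.integrable_map_iff]
      exact hGint
    · intro i
      rw [hfe.integral_map]
      have hkey : ∀ γ, (c γ + κ1 γ *ᵥ g1 γ + κ2 γ *ᵥ g2 γ) i
          = c γ i + ∑ i', ((κ1 γ * (κ1 γ)ᵀ) i i' + (κ2 γ * (κ2 γ)ᵀ) i i') * l i' := by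
        intro γ
        have e1 : g1 γ = (κ1 γ)ᵀ *ᵥ l := by
          funext j
          simp [hg1, Matrix.mulVec, dotProduct, Matrix.transpose_apply]
        have e2 : g2 γ = (κ2 γ)ᵀ *ᵥ l := by
          funext j
          simp [hg2, Matrix.mulVec, dotProduct, Matrix.transpose_apply]
        rw [e1, e2]
        simp only [Pi.add_apply, Matrix.mulVec_mulVec]
        have h4 : ((κ1 γ * (κ1 γ)ᵀ) *ᵥ l) i + ((κ2 γ * (κ2 γ)ᵀ) *ᵥ l) i
            = ∑ i', ((κ1 γ * (κ1 γ)ᵀ) i i' + (κ2 γ * (κ2 γ)ᵀ) i i') * l i' := by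
          simp only [Matrix.mulVec, dotProduct, add_mul, Finset.sum_add_distrib]
        rw [add_assoc, h4]
      simp_rw [hf, hkey]
      rw [integral_add (hcint i)
        (integrable_finset_sum _ fun i' _ => (hAq i i').mul_const _)]
      rw [integral_finset_sum _ fun i' _ => (hAq i i').mul_const _]
      have : ∀ i', ∫ γ, ((κ1 γ * (κ1 γ)ᵀ) i i' + (κ2 γ * (κ2 γ)ᵀ) i i') * l i' ∂π
          = q i i' * l i' := by
        intro i'
        rw [integral_mul_const, ← hq]
      simp_rw [this]
      have hqw : ∑ i', q i i' * l i' = w i := by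
        have := congrFun hql i
        simpa [Matrix.mulVec, dotProduct] using this
      rw [← hcbar, hqw]
      simp [hw]
    · rw [hfe.integral_map]
      have : (fun γ => (∑ i, (f γ).1 i ^ 2) + ∑ i, ((f γ).2.1 i) ^ 2) = G := rfl
      rw [this, hGval]
  have hgoal : w ⬝ᵥ l = t := by rw [dotProduct_comm, ht]
  rw [hgoal]
  exact le_antisymm (csInf_le ⟨(1 / 2) * t, hlb⟩ hmemK) (le_csInf ⟨_, hmemK⟩ hlb)
end
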